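/- Let f, g : ℝ^d → ℝ with g convex. Suppose x* minimizes f and f satisfies the local strong convexity inequality f(x) ≥ f(x*) + (μ/2)‖x - x*‖² for all x with ‖x - x*‖ = τ. If sup_x |f(x) - g(x)| ≤ δ and δ < μτ²/4, then every minimizer y* of g satisfies ‖y* - x*‖ ≤ τ. -/

import Mathlib

open Metric

/-- if `g` is convex, uniformly `δ`-close to `f`, `f` is locally
strongly convex on the sphere of radius `τ` around its minimizer `xstar`, and
`δ < μ τ² / 4`, then every minimizer of `g` lies in the closed ball of radius
`τ` around `xstar`. -/
theorem perturbed_minimizer_in_ball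
    {d : ℕ} (f g : EuclideanSpace ℝ (Fin d) → ℝ)
    (xstar ystar : EuclideanSpace ℝ (Fin d)) (δ μ τ : ℝ)
    (hδ : 0 < δ) (hμ : 0 < μ) (hτ : 0 < τ)
    (hgconv : ConvexOn ℝ Set.univ g)
    (hxmin : ∀ x, f xstar ≤ f x)
    (hsc : ∀ x, ‖x - xstar‖ = τ → f xstar + (μ / 2) * ‖x - xstar‖ ^ 2 ≤ f x)
    (hclose : ∀ x, |f x - g x| ≤ δ)
    (hδsmall : δ < μ * τ ^ 2 / 4)
    (hymin : ∀ x, g ystar ≤ g x) :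
    ‖ystar - xstar‖ ≤ τ := by
  by_contra h
  push_neg at h
  set R := ‖ystar - xstar‖ with hR
  have hR0 : 0 < R := lt_trans hτ h
  set t : ℝ := τ / R with ht
  have ht0 : 0 < t := div_pos hτ hR0
  have ht1 : t < 1 := (div_lt_one hR0).2 h
  set z := (1 - t) • xstar + t • ystar with hz
  have hznorm : ‖z - xstar‖ = τ := by
    have : z - xstar = t • (ystar - xstar) := by
      simp [hz, smul_sub, sub_smul, one_smul]
      abel
    rw [this, norm_smul, Real.norm_eq_abs, abs_of_pos ht0]
    rw [ht, ← hR]; exact div_mul_cancel₀ τ hR0.ne'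
  have hgz : g z ≤ g xstar := by
    have := hgconv.2 (Set.mem_univ xstar) (Set.mem_univ ystar)
      (by linarith : (0:ℝ) ≤ 1 - t) ht0.le (by ring)
    calc g z ≤ (1 - t) * g xstar + t * g ystar := this
      _ ≤ (1 - t) * g xstar + t * g xstar := by nlinarith [hymin xstar]
      _ = g xstar := by ring
  have h1 : f z ≤ g z + δ := by have := abs_le.1 (hclose z); linarith
  have h2 : g xstar ≤ f xstar + δ := by have := abs_le.1 (hclose xstar); linarith
  have h3 := hsc z hznorm
  rw [hznorm] at h3
  nlinarith
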